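/- Joint Lipschitz bound for the reaction rate: let k_c > 0 and let k_s : ℝ → ℝ be Lipschitz continuous with constant L and satisfy k_s(s) ≥ k_{s1} > 0 for all s. Define R(c, T) = k_c (1 − 1/(1 + k_s(T)/k_c)) c. Then for all real T₁, T₂ and all c₁, c₂ ∈ [0,1], |R(c₁, T₁) − R(c₂, T₂)| ≤ k_c |c₁ − c₂| + L (1 + k_{s1}/k_c)^{-2} |T₁ − T₂|. -/
import Mathlib

lemma stmt_10_aux (g₁ g₂ kc D c₁ c₂ : ℝ) (h0 : 0 ≤ g₁) (hle : g₁ ≤ kc)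
    (hd : |g₁ - g₂| ≤ D) (h0₂ : 0 ≤ c₂) (h1₂ : c₂ ≤ 1) :
    |g₁ * c₁ - g₂ * c₂| ≤ kc * |c₁ - c₂| + D := by
  have hsplit : g₁ * c₁ - g₂ * c₂ = g₁ * (c₁ - c₂) + (g₁ - g₂) * c₂ := by ring
  rw [hsplit]
  refine (abs_add_le _ _).trans ?_
  rw [abs_mul, abs_mul]
  have hD : 0 ≤ D := le_trans (abs_nonneg _) hd
  have h2 : |c₂| ≤ 1 := abs_le.mpr ⟨by linarith, h1₂⟩
  have hg : |g₁| ≤ kc := abs_le.mpr ⟨by linarith, hle⟩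
  have t1 : |g₁| * |c₁ - c₂| ≤ kc * |c₁ - c₂| :=
    mul_le_mul_of_nonneg_right hg (abs_nonneg _)
  have t2 : |g₁ - g₂| * |c₂| ≤ D * 1 :=
    mul_le_mul hd h2 (abs_nonneg _) hD
  linarith

/-- Joint Lipschitz bound for the reaction rate
`R(c, T) = k_c (1 − 1/(1 + k_s(T)/k_c)) c`: for all real `T₁, T₂` and all
`c₁, c₂ ∈ [0,1]`,
`|R(c₁,T₁) − R(c₂,T₂)| ≤ k_c |c₁ − c₂| + L (1 + k_{s1}/k_c)⁻² |T₁ − T₂|`. -/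
theorem stmt_10 (kc L ks1 : ℝ) (hkc : 0 < kc) (hks1 : 0 < ks1)
    (ks : ℝ → ℝ) (hlb : ∀ s, ks1 ≤ ks s)
    (hlip : ∀ a b, |ks a - ks b| ≤ L * |a - b|)
    (T₁ T₂ c₁ c₂ : ℝ) (hc₁ : c₁ ∈ Set.Icc (0 : ℝ) 1) (hc₂ : c₂ ∈ Set.Icc (0 : ℝ) 1) :
    |kc * (1 - 1 / (1 + ks T₁ / kc)) * c₁ - kc * (1 - 1 / (1 + ks T₂ / kc)) * c₂| ≤
      kc * |c₁ - c₂| + L * ((1 + ks1 / kc) ^ 2)⁻¹ * |T₁ - T₂| := by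
  obtain ⟨h0₁, h1₁⟩ := hc₁
  obtain ⟨h0₂, h1₂⟩ := hc₂
  have hk1 := hlb T₁
  have hk2 := hlb T₂
  have hkk : 0 < ks1 / kc := div_pos hks1 hkc
  have hA' : 1 + ks1 / kc ≤ 1 + ks T₁ / kc := by gcongr
  have hB' : 1 + ks1 / kc ≤ 1 + ks T₂ / kc := by gcongr
  have hm : (0:ℝ) < 1 + ks1 / kc := by linarith
  have hA : (0:ℝ) < 1 + ks T₁ / kc := lt_of_lt_of_le hm hA'
  have hB : (0:ℝ) < 1 + ks T₂ / kc := lt_of_lt_of_le hm hB'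
  have hL : 0 ≤ L := le_trans (abs_nonneg _) (by simpa using hlip 0 1)
  have hinvA : 0 < 1 / (1 + ks T₁ / kc) := by positivity
  have h1A : 1 / (1 + ks T₁ / kc) ≤ 1 := by
    rw [div_le_one hA]
    have : 0 ≤ ks T₁ / kc := div_nonneg (by linarith) hkc.le
    linarith
  have hf₁nn : 0 ≤ kc * (1 - 1 / (1 + ks T₁ / kc)) := by nlinarith
  have hf₁le : kc * (1 - 1 / (1 + ks T₁ / kc)) ≤ kc := by nlinarith
  have hAne : (1 + ks T₁ / kc) ≠ 0 := ne_of_gt hA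
  have hBne : (1 + ks T₂ / kc) ≠ 0 := ne_of_gt hB
  have hkA : kc + ks T₁ ≠ 0 := by intro h; nlinarith
  have hkB : kc + ks T₂ ≠ 0 := by intro h; nlinarith
  have hdiff : kc * (1 - 1 / (1 + ks T₁ / kc)) - kc * (1 - 1 / (1 + ks T₂ / kc)) =
      (ks T₁ - ks T₂) / ((1 + ks T₁ / kc) * (1 + ks T₂ / kc)) := by
    field_simp
    ring
  have hdenom : (1 + ks1 / kc) ^ 2 ≤ (1 + ks T₁ / kc) * (1 + ks T₂ / kc) := by nlinarith
  have hdb : |kc * (1 - 1 / (1 + ks T₁ / kc)) - kc * (1 - 1 / (1 + ks T₂ / kc))| ≤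
      L * ((1 + ks1 / kc) ^ 2)⁻¹ * |T₁ - T₂| := by
    rw [hdiff, abs_div,
      abs_of_pos (by positivity : (0:ℝ) < (1 + ks T₁ / kc) * (1 + ks T₂ / kc))]
    have := div_le_div₀ (mul_nonneg hL (abs_nonneg (T₁ - T₂))) (hlip T₁ T₂)
      (by positivity : (0:ℝ) < (1 + ks1 / kc) ^ 2) hdenom
    calc |ks T₁ - ks T₂| / ((1 + ks T₁ / kc) * (1 + ks T₂ / kc))
        ≤ L * |T₁ - T₂| / (1 + ks1 / kc) ^ 2 := this
      _ = L * ((1 + ks1 / kc) ^ 2)⁻¹ * |T₁ - T₂| := by ring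
  exact stmt_10_aux _ _ _ _ _ _ hf₁nn hf₁le hdb h0₂ h1₂
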